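/- Let Y be a Hadamard space and G a finite group of isometries of Y fixing a point p ∈ Y. Then the fixed-point set (TC_pY)^G of the induced action of G on the tangent cone TC_pY equals the closure of the set ℝ₊·π_p(Y^G) = { t·V : t ≥ 0, V ∈ π_p(Y^G) }, where Y^G is the fixed-point set of G in Y and π_p : Y → TC_pY is the map q ↦ ([pq], d(p,q)). -/

import Mathlib

open Filter Metric Set Topology

/-- A Hadamard space: a complete metric space with midpoints satisfying the CN
(comparison) inequality of CAT(0) geometry. -/
class HadamardSpace (Y : Type*) [MetricSpace Y] : Prop where
  complete : CompleteSpace Y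
  midpoints : ∀ x y : Y, ∃ m : Y, dist x m = dist x y / 2 ∧ dist m y = dist x y / 2
  cn : ∀ x y z m : Y, dist y m = dist y z / 2 → dist m z = dist y z / 2 →
    dist x m ^ 2 ≤ dist x y ^ 2 / 2 + dist x z ^ 2 / 2 - dist y z ^ 2 / 4

set_option linter.unusedSectionVars false
section Aux
variable {Y : Type*} [MetricSpace Y] [HadamardSpace Y]

/-- Uniqueness of points lying "between" `p` and `q` at prescribed distances. -/
lemma hs_unique (p q a b : Y)
    (h1 : dist p a + dist a q = dist p q)
    (h2 : dist p b = dist p a) (h3 : dist b q = dist a q) : a = b := by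
  obtain ⟨m, hm1, hm2⟩ := HadamardSpace.midpoints a b
  have c1 := HadamardSpace.cn p a b m hm1 hm2
  have c2 := HadamardSpace.cn q a b m hm1 hm2
  rw [dist_comm q a, dist_comm q b, h3] at c2
  rw [h2] at c1
  have t : dist p q ≤ dist p m + dist q m := by
    rw [dist_comm q m]; exact dist_triangle _ _ _
  have hA : (0:ℝ) ≤ dist p a := dist_nonneg
  have hB : (0:ℝ) ≤ dist a q := dist_nonneg
  have hu : (0:ℝ) ≤ dist p m := dist_nonneg
  have hv : (0:ℝ) ≤ dist q m := dist_nonneg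
  have hD : (0:ℝ) ≤ dist a b := dist_nonneg
  have hD2 : dist a b ^ 2 ≤ 0 := by
    have hu2 : dist p m ≤ dist p a := by nlinarith
    have hv2 : dist q m ≤ dist a q := by nlinarith
    have hq : dist p a + dist a q ≤ dist p m + dist q m := by rw [h1]; exact t
    have e1 : dist p m = dist p a := le_antisymm hu2 (by linarith)
    rw [e1] at c1
    linarith
  have : dist a b ≤ 0 := by nlinarith
  exact dist_le_zero.mp this

variable (p : Y) (γ : Y → ℝ → Y)
  (hγ0 : ∀ q : Y, γ q 0 = p) (hγ1 : ∀ q : Y, γ q 1 = q)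
  (hγgeo : ∀ q : Y, ∀ τ ∈ Set.Icc (0:ℝ) 1, ∀ τ' ∈ Set.Icc (0:ℝ) 1,
      dist (γ q τ) (γ q τ') = |τ - τ'| * dist p q)

include hγ0 hγgeo in
lemma distp (q : Y) {τ : ℝ} (hτ : τ ∈ Set.Icc (0:ℝ) 1) :
    dist p (γ q τ) = τ * dist p q := by
  have h := hγgeo q 0 ⟨le_refl _, zero_le_one⟩ τ hτ
  rw [hγ0, show |(0:ℝ) - τ| = τ by rw [abs_sub_comm, sub_zero, abs_of_nonneg hτ.1]] at h
  exact h

include hγ1 hγgeo in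
lemma distq (q : Y) {τ : ℝ} (hτ : τ ∈ Set.Icc (0:ℝ) 1) :
    dist (γ q τ) q = (1 - τ) * dist p q := by
  have h := hγgeo q τ hτ 1 ⟨zero_le_one, le_refl _⟩
  rw [hγ1, show |τ - 1| = 1 - τ by rw [abs_sub_comm, abs_of_nonneg (by linarith [hτ.2])]] at h
  exact h

include hγ0 hγ1 hγgeo in
lemma reparam (q : Y) {τ t : ℝ} (hτ : τ ∈ Set.Icc (0:ℝ) 1) (ht : t ∈ Set.Icc (0:ℝ) 1) :
    γ q (t * τ) = γ (γ q τ) t := by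
  have htτ : t * τ ∈ Set.Icc (0:ℝ) 1 :=
    ⟨mul_nonneg ht.1 hτ.1, le_trans (mul_le_of_le_one_left hτ.1 ht.2) hτ.2⟩
  have dpτ := distp p γ hγ0 hγgeo q hτ
  have dptτ := distp p γ hγ0 hγgeo q htτ
  have dpt : dist p (γ (γ q τ) t) = t * dist p (γ q τ) := distp p γ hγ0 hγgeo _ ht
  have dqt : dist (γ (γ q τ) t) (γ q τ) = (1 - t) * dist p (γ q τ) := by
    have h := hγgeo (γ q τ) t ht 1 ⟨zero_le_one, le_refl _⟩
    rwa [hγ1, show |t - 1| = 1 - t by rw [abs_sub_comm, abs_of_nonneg (by linarith [ht.2])]] at h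
  have dtt : dist (γ q (t * τ)) (γ q τ) = (τ - t * τ) * dist p q := by
    have h := hγgeo q (t * τ) htτ τ hτ
    rwa [show |t * τ - τ| = τ - t * τ by
      rw [abs_sub_comm]; exact abs_of_nonneg (by nlinarith [ht.2, hτ.1])] at h
  refine hs_unique p (γ q τ) (γ q (t * τ)) (γ (γ q τ) t) ?_ ?_ ?_
  · rw [dptτ, dtt, dpτ]; ring
  · rw [dpt, dptτ, dpτ]; ring
  · rw [dqt, dtt, dpτ]; ring

include hγ0 hγ1 hγgeo in
lemma halfd (a b : Y) : dist (γ a (1/2)) (γ b (1/2)) ≤ dist a b / 2 := by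
  have h2 : (1/2 : ℝ) ∈ Set.Icc (0:ℝ) 1 := by norm_num
  have ha0 : dist p (γ a (1/2)) = dist p a / 2 := by
    rw [distp p γ hγ0 hγgeo a h2]; ring
  have ha1 : dist (γ a (1/2)) a = dist p a / 2 := by
    rw [distq p γ hγ1 hγgeo a h2]; ring
  have hb0 : dist p (γ b (1/2)) = dist p b / 2 := by
    rw [distp p γ hγ0 hγgeo b h2]; ring
  have hb1 : dist (γ b (1/2)) b = dist p b / 2 := by
    rw [distq p γ hγ1 hγgeo b h2]; ring
  have c1 := HadamardSpace.cn (γ b (1/2)) p a (γ a (1/2))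
    ha0 ha1
  have c2 := HadamardSpace.cn a p b (γ b (1/2)) hb0 hb1
  rw [dist_comm (γ b (1/2)) p, hb0] at c1
  rw [dist_comm a p] at c2
  have key : dist (γ b (1/2)) (γ a (1/2)) ^ 2 ≤ (dist a b / 2) ^ 2 := by
    rw [dist_comm (γ b (1/2)) a] at c1
    nlinarith [c1, c2, dist_comm a b]
  have h1 : (0:ℝ) ≤ dist a b / 2 := by positivity
  rw [dist_comm (γ a (1/2)) (γ b (1/2))]
  nlinarith [dist_nonneg (x := γ b (1/2)) (y := γ a (1/2))]

include hγ0 hγ1 hγgeo in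
lemma powd : ∀ n : ℕ, ∀ a b : Y,
    dist (γ a ((1/2 : ℝ)^n)) (γ b ((1/2 : ℝ)^n)) ≤ (1/2 : ℝ)^n * dist a b := by
  intro n
  induction n with
  | zero => intro a b; simp [hγ1]
  | succ n ih =>
    intro a b
    have h2 : (1/2 : ℝ) ∈ Set.Icc (0:ℝ) 1 := by norm_num
    have hn : ((1/2 : ℝ)^n) ∈ Set.Icc (0:ℝ) 1 :=
      ⟨by positivity, pow_le_one₀ (by norm_num) (by norm_num)⟩
    have e1 : ((1/2 : ℝ))^(n+1) = (1/2 : ℝ)^n * (1/2) := pow_succ _ _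
    rw [e1, reparam p γ hγ0 hγ1 hγgeo a h2 hn, reparam p γ hγ0 hγ1 hγgeo b h2 hn]
    calc dist (γ (γ a (1/2)) ((1/2:ℝ)^n)) (γ (γ b (1/2)) ((1/2:ℝ)^n))
        ≤ (1/2:ℝ)^n * dist (γ a (1/2)) (γ b (1/2)) := ih _ _
      _ ≤ (1/2:ℝ)^n * (dist a b / 2) := by
          exact mul_le_mul_of_nonneg_left (halfd p γ hγ0 hγ1 hγgeo a b) (by positivity)
      _ = (1/2:ℝ)^n * (1/2) * dist a b := by ring

end Aux

section Grp
variable {Y : Type*} [MetricSpace Y] [HadamardSpace Y]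
  {G : Type*} [Group G] [Finite G] [MulAction G Y]

lemma equiv_geo (hGY : ∀ g : G, Isometry (fun y : Y => g • y))
    (p : Y) (hp : ∀ g : G, g • p = p) (γ : Y → ℝ → Y)
    (hγ0 : ∀ q : Y, γ q 0 = p) (hγ1 : ∀ q : Y, γ q 1 = q)
    (hγgeo : ∀ q : Y, ∀ τ ∈ Set.Icc (0:ℝ) 1, ∀ τ' ∈ Set.Icc (0:ℝ) 1,
      dist (γ q τ) (γ q τ') = |τ - τ'| * dist p q)
    (g : G) (q : Y) {τ : ℝ} (hτ : τ ∈ Set.Icc (0:ℝ) 1) :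
    g • γ q τ = γ (g • q) τ := by
  have hdist : ∀ a b : Y, dist (g • a) (g • b) = dist a b := fun a b => (hGY g).dist_eq a b
  have hpq : dist p (g • q) = dist p q := by
    conv_lhs => rw [← hp g]
    exact hdist p q
  refine hs_unique p (g • q) (g • γ q τ) (γ (g • q) τ) ?_ ?_ ?_
  · have e1 : dist p (g • γ q τ) = τ * dist p q := by
      conv_lhs => rw [← hp g]
      rw [hdist]; exact distp p γ hγ0 hγgeo q hτ
    have e2 : dist (g • γ q τ) (g • q) = (1 - τ) * dist p q := by
      rw [hdist]; exact distq p γ hγ1 hγgeo q hτ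
    rw [e1, e2, hpq]; ring
  · rw [distp p γ hγ0 hγgeo (g • q) hτ, hpq]
    conv_rhs => rw [← hp g]
    rw [hdist, distp p γ hγ0 hγgeo q hτ]
  · rw [distq p γ hγ1 hγgeo (g • q) hτ, hpq, hdist, distq p γ hγ1 hγgeo q hτ]

lemma circum (hGY : ∀ g : G, Isometry (fun y : Y => g • y)) (y : Y) (r : ℝ)
    (hr : ∀ g : G, dist y (g • y) ≤ r) :
    ∃ c : Y, (∀ g : G, g • c = c) ∧ dist c y ≤ r := by
  haveI : CompleteSpace Y := HadamardSpace.complete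
  haveI : Fintype G := Fintype.ofFinite G
  haveI : Nonempty G := One.instNonempty
  have hdist : ∀ (g : G) (a b : Y), dist (g • a) (g • b) = dist a b :=
    fun g a b => (hGY g).dist_eq a b
  set f : Y → ℝ := fun x => Finset.univ.sup' Finset.univ_nonempty
    (fun g : G => dist x (g • y) ^ 2) with hf
  have hfle : ∀ x r', (∀ g : G, dist x (g • y) ^ 2 ≤ r') → f x ≤ r' := by
    intro x r' h
    rw [hf]
    exact Finset.sup'_le _ _ (fun g _ => h g)
  have hlef : ∀ x (g : G), dist x (g • y) ^ 2 ≤ f x := by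
    intro x g
    rw [hf]
    exact Finset.le_sup' (fun g : G => dist x (g • y) ^ 2) (Finset.mem_univ g)
  have hf0 : ∀ x, 0 ≤ f x := fun x => le_trans (sq_nonneg _) (hlef x 1)
  set I := sInf (Set.range f) with hI
  have hbdd : BddBelow (Set.range f) := ⟨0, by rintro _ ⟨x, rfl⟩; exact hf0 x⟩
  have hne : (Set.range f).Nonempty := ⟨f y, y, rfl⟩
  have hIle : ∀ x, I ≤ f x := fun x => csInf_le hbdd ⟨x, rfl⟩
  -- key convexity estimate
  have key : ∀ a b : Y, dist a b ^ 2 ≤ 2 * f a + 2 * f b - 4 * I := by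
    intro a b
    obtain ⟨m, hm1, hm2⟩ := HadamardSpace.midpoints a b
    have h1 : f m ≤ f a / 2 + f b / 2 - dist a b ^ 2 / 4 := by
      apply hfle
      intro g
      have hcn := HadamardSpace.cn (g • y) a b m hm1 hm2
      have l1 := hlef a g
      have l2 := hlef b g
      rw [dist_comm a (g • y)] at l1
      rw [dist_comm b (g • y)] at l2
      rw [dist_comm m (g • y)]
      linarith
    linarith [hIle m]
  -- minimizing sequence
  have hex : ∀ n : ℕ, ∃ x : Y, f x < I + 1 / (n + 1) := by
    intro n
    obtain ⟨a, ⟨x, rfl⟩, ha⟩ := Real.lt_sInf_add_pos hne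
      (by positivity : (0:ℝ) < 1 / (n + 1))
    exact ⟨x, ha⟩
  choose x hx using hex
  have hcau : CauchySeq x := by
    apply cauchySeq_of_le_tendsto_0 (fun N : ℕ => Real.sqrt (4 / (N + 1)))
    · intro n m N hn hm
      have e1 : (1:ℝ) / (n + 1) ≤ 1 / (N + 1) := by
        apply one_div_le_one_div_of_le (by positivity)
        have : (N:ℝ) ≤ n := by exact_mod_cast hn
        linarith
      have e2 : (1:ℝ) / (m + 1) ≤ 1 / (N + 1) := by
        apply one_div_le_one_div_of_le (by positivity)
        have : (N:ℝ) ≤ m := by exact_mod_cast hm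
        linarith
      have hsq : dist (x n) (x m) ^ 2 ≤ 4 / (N + 1) := by
        have k := key (x n) (x m)
        have b1 := hx n
        have b2 := hx m
        have := hIle (x n)
        have e4 : (4:ℝ) / ((N:ℝ) + 1) = 4 * (1 / ((N:ℝ) + 1)) := by ring
        rw [e4]
        linarith
      have h4 : (0:ℝ) ≤ 4 / ((N:ℝ) + 1) := by positivity
      calc dist (x n) (x m) = Real.sqrt (dist (x n) (x m) ^ 2) :=
            (Real.sqrt_sq dist_nonneg).symm
        _ ≤ Real.sqrt (4 / (N + 1)) := Real.sqrt_le_sqrt hsq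
    · have h1 : Tendsto (fun N : ℕ => 4 / ((N:ℝ) + 1)) atTop (𝓝 0) := by
        have := (tendsto_one_div_add_atTop_nhds_zero_nat : Tendsto (fun n : ℕ => 1 / ((n:ℝ) + 1)) atTop (𝓝 0)).const_mul 4
        simpa [mul_one_div, div_eq_mul_inv] using this
      have := h1.sqrt
      simpa using this
  obtain ⟨c, hcx⟩ := cauchySeq_tendsto_of_complete hcau
  have hc : ∀ x₀ : Y, Tendsto x atTop (𝓝 x₀) → ∀ g : G, dist x₀ (g • y) ^ 2 ≤ I := by
    intro x₀ hx₀ g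
    have h1 : Tendsto (fun n => dist (x n) (g • y) ^ 2) atTop (𝓝 (dist x₀ (g • y) ^ 2)) :=
      (hx₀.dist tendsto_const_nhds).pow 2
    have h2 : Tendsto (fun n : ℕ => I + 1 / ((n:ℝ) + 1)) atTop (𝓝 I) := by
      simpa using (tendsto_one_div_add_atTop_nhds_zero_nat).const_add I
    exact le_of_tendsto_of_tendsto' h1 h2 (fun n => le_trans (hlef (x n) g) (hx n).le)
  have hcI := hc c hcx
  -- fixedness
  have hfix : ∀ g₀ : G, g₀ • c = c := by
    intro g₀
    have hc' : ∀ g : G, dist (g₀ • c) (g • y) ^ 2 ≤ I := by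
      intro g
      have e : dist (g₀ • c) (g • y) = dist c ((g₀⁻¹ * g) • y) := by
        conv_lhs => rw [show g • y = g₀ • ((g₀⁻¹ * g) • y) by
          rw [smul_smul, mul_inv_cancel_left]]
        exact hdist g₀ c _
      rw [e]; exact hcI _
    have hfc : f c ≤ I := hfle _ _ hcI
    have hfc' : f (g₀ • c) ≤ I := hfle _ _ hc'
    have hk := key c (g₀ • c)
    have : dist c (g₀ • c) ≤ 0 := by nlinarith [dist_nonneg (x := c) (y := g₀ • c)]
    exact (dist_le_zero.mp this).symm
  refine ⟨c, hfix, ?_⟩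
  have hr0 : 0 ≤ r := le_trans dist_nonneg (hr 1)
  have hfy : f y ≤ r ^ 2 := hfle _ _ (fun g => by
    have := hr g
    nlinarith [dist_nonneg (x := y) (y := g • y)])
  have h1 : dist c y ^ 2 ≤ r ^ 2 := by
    have := hcI 1
    rw [one_smul] at this
    linarith [hIle y]
  nlinarith [dist_nonneg (x := c) (y := y)]

end Grp


/-- Fixed points of a finite isometry group in the tangent cone.
The tangent cone `TC = TC_pY` at `p` is axiomatized as a complete metric space with
origin `o`, projection `π : Y → TC`, a scaling `sm : ℝ → TC → TC`, such that the set of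
scaled projected vectors is dense, and such that distances in the cone are the scaling
limits of distances in `Y` along the (fraction-parametrized) geodesics `γ q` from `p`
to `q`. A finite group `G` acting isometrically on `Y` fixing `p` induces (compatible
data `act`) an isometric action on `TC`. Conclusion: the fixed-point set of `G` in the
tangent cone is the closure of `ℝ₊ · π(Y^G)`. -/
theorem stmt3 {Y : Type*} [MetricSpace Y] [HadamardSpace Y]
    {G : Type*} [Group G] [Finite G] [MulAction G Y]
    (hGY : ∀ g : G, Isometry (fun y : Y => g • y))
    (p : Y) (hp : ∀ g : G, g • p = p)
    {TC : Type*} [MetricSpace TC] [CompleteSpace TC]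
    (o : TC) (π : Y → TC) (sm : ℝ → TC → TC)
    (γ : Y → ℝ → Y)
    (hγ0 : ∀ q : Y, γ q 0 = p) (hγ1 : ∀ q : Y, γ q 1 = q)
    (hγgeo : ∀ q : Y, ∀ τ ∈ Set.Icc (0:ℝ) 1, ∀ τ' ∈ Set.Icc (0:ℝ) 1,
      dist (γ q τ) (γ q τ') = |τ - τ'| * dist p q)
    (hπp : π p = o)
    (hπd : ∀ q : Y, dist o (π q) = dist p q)
    (hsm0 : ∀ x : TC, sm 0 x = o) (hsmo : ∀ s : ℝ, sm s o = o)
    (hsm1 : ∀ x : TC, sm 1 x = x)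
    (hcone : ∀ s s' : ℝ, 0 ≤ s → 0 ≤ s' → ∀ q q' : Y,
      Tendsto (fun e : ℝ => dist (γ q (e * s)) (γ q' (e * s')) / e) (𝓝[>] (0 : ℝ))
        (𝓝 (dist (sm s (π q)) (sm s' (π q')))))
    (hdense : Dense {x : TC | ∃ s : ℝ, 0 ≤ s ∧ ∃ q : Y, x = sm s (π q)})
    (act : G → TC → TC) (hact : ∀ g : G, Isometry (act g))
    (hacto : ∀ g : G, act g o = o)
    (hequiv : ∀ (g : G) (q : Y), act g (π q) = π (g • q))
    (hactsm : ∀ (g : G) (s : ℝ) (x : TC), act g (sm s x) = sm s (act g x)) :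
    {x : TC | ∀ g : G, act g x = x}
      = closure {x : TC | ∃ s : ℝ, 0 ≤ s ∧ ∃ q : Y, (∀ g : G, g • q = q) ∧ x = sm s (π q)} := by
  ext x
  simp only [Set.mem_setOf_eq]
  constructor
  · intro hx
    rw [Metric.mem_closure_iff]
    intro ε hε
    set δ := ε / 8 with hδ
    have hδ0 : 0 < δ := by positivity
    obtain ⟨v, hvS, hvx⟩ := hdense.exists_dist_lt x hδ0
    obtain ⟨s, hs0, q, rfl⟩ := hvS
    -- the orbit of v is close to v
    have hgv : ∀ g : G, dist (sm s (π (g • q))) (sm s (π q)) < 2 * δ := by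
      intro g
      have e : act g (sm s (π q)) = sm s (π (g • q)) := by rw [hactsm, hequiv]
      have e2 : dist (sm s (π (g • q))) x = dist (sm s (π q)) x := by
        rw [← e]
        conv_lhs => rw [← hx g]
        exact (hact g).dist_eq _ _
      have t := dist_triangle (sm s (π (g • q))) x (sm s (π q))
      rw [e2] at t
      have hc2 : dist (sm s (π q)) x = dist x (sm s (π q)) := dist_comm _ _
      linarith
    -- choose a small scale e
    have hev : ∀ᶠ e in 𝓝[>] (0:ℝ), (0 < e ∧ e * s ≤ 1) ∧
        ∀ g : G, dist (γ (g • q) (e * s)) (γ q (e * s)) ≤ 2 * δ * e := by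
      apply Filter.Eventually.and
      · have h1 : ∀ᶠ e in 𝓝[>] (0:ℝ), 0 < e := self_mem_nhdsWithin
        have h2 : ∀ᶠ e in 𝓝[>] (0:ℝ), e < 1 / (s + 1) := by
          apply Filter.Eventually.filter_mono nhdsWithin_le_nhds
          exact eventually_of_mem (Iio_mem_nhds (by positivity)) (fun e he => he)
        filter_upwards [h1, h2] with e he1 he2
        refine ⟨he1, ?_⟩
        have hs1 : (0:ℝ) < s + 1 := by linarith
        have : e * s ≤ (1 / (s + 1)) * s := by
          apply mul_le_mul_of_nonneg_right he2.le hs0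
        have : (1 / (s + 1)) * s ≤ 1 := by
          rw [div_mul_eq_mul_div, div_le_one hs1]; linarith
        nlinarith [mul_le_mul_of_nonneg_right he2.le hs0]
      · rw [eventually_all]
        intro g
        have hT := hcone s s hs0 hs0 (g • q) q
        have := hT.eventually_lt_const (hgv g)
        filter_upwards [this, self_mem_nhdsWithin] with e h1 h2
        have h2' : (0:ℝ) < e := h2
        rw [div_lt_iff₀ h2'] at h1
        nlinarith
    obtain ⟨e, ⟨he0, hes1⟩, horb⟩ := hev.exists
    have hes : e * s ∈ Set.Icc (0:ℝ) 1 := ⟨mul_nonneg he0.le hs0, hes1⟩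
    set y := γ q (e * s) with hy
    have hyg : ∀ g : G, dist y (g • y) ≤ 2 * δ * e := by
      intro g
      rw [hy, equiv_geo hGY p hp γ hγ0 hγ1 hγgeo g q hes, dist_comm]
      exact horb g
    obtain ⟨c, hcfix, hcy⟩ := circum hGY y (2 * δ * e) hyg
    have he0' : (0:ℝ) < 1 / e := by positivity
    have hseq : Tendsto (fun n : ℕ => e * (1/2:ℝ)^n) atTop (𝓝[>] (0:ℝ)) := by
      apply tendsto_nhdsWithin_of_tendsto_nhds_of_eventually_within
      · have := (tendsto_pow_atTop_nhds_zero_of_lt_one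
          (by norm_num : (0:ℝ) ≤ 1/2) (by norm_num : (1/2:ℝ) < 1)).const_mul e
        simpa using this
      · filter_upwards with n
        have : (0:ℝ) < e * (1/2:ℝ)^n := by positivity
        exact Set.mem_Ioi.mpr this
    have hlim := (hcone (1/e) s he0'.le hs0 c q).comp hseq
    have hbound : ∀ n : ℕ,
        dist (γ c ((e * (1/2:ℝ)^n) * (1/e))) (γ q ((e * (1/2:ℝ)^n) * s)) / (e * (1/2:ℝ)^n)
          ≤ 2 * δ := by
      intro n
      have hne : e ≠ 0 := he0.ne'
      have h1 : (e * (1/2:ℝ)^n) * (1/e) = (1/2:ℝ)^n := by field_simp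
      have hnI : ((1/2:ℝ)^n) ∈ Set.Icc (0:ℝ) 1 :=
        ⟨by positivity, pow_le_one₀ (by norm_num) (by norm_num)⟩
      have h2 : γ q ((e * (1/2:ℝ)^n) * s) = γ (γ q (e * s)) ((1/2:ℝ)^n) := by
        rw [show (e * (1/2:ℝ)^n) * s = (1/2:ℝ)^n * (e * s) by ring]
        exact reparam p γ hγ0 hγ1 hγgeo q hes hnI
      rw [h1, h2]
      have h3 := powd p γ hγ0 hγ1 hγgeo n c (γ q (e * s))
      have h4 : dist (γ c ((1/2:ℝ)^n)) (γ (γ q (e * s)) ((1/2:ℝ)^n))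
          ≤ (1/2:ℝ)^n * (2 * δ * e) :=
        le_trans h3 (mul_le_mul_of_nonneg_left hcy (by positivity))
      rw [div_le_iff₀ (by positivity)]
      exact h4.trans_eq (by ring)
    have hw : dist (sm (1/e) (π c)) (sm s (π q)) ≤ 2 * δ :=
      le_of_tendsto hlim (Filter.Eventually.of_forall hbound)
    refine ⟨sm (1/e) (π c), ⟨1/e, he0'.le, c, hcfix, rfl⟩, ?_⟩
    have t := dist_triangle x (sm s (π q)) (sm (1/e) (π c))
    rw [dist_comm (sm s (π q)) (sm (1/e) (π c))] at t
    calc dist x (sm (1/e) (π c)) ≤ dist x (sm s (π q)) + dist (sm (1/e) (π c)) (sm s (π q)) := t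
      _ < δ + 2 * δ := add_lt_add_of_lt_of_le hvx hw
      _ < ε := by rw [hδ]; linarith
  · intro hx g
    have hcl : IsClosed {z : TC | act g z = z} := isClosed_eq (hact g).continuous continuous_id
    have hsub : {x : TC | ∃ s : ℝ, 0 ≤ s ∧ ∃ q : Y, (∀ g : G, g • q = q) ∧ x = sm s (π q)}
        ⊆ {z : TC | act g z = z} := by
      rintro z ⟨s, hs0, q, hq, rfl⟩
      show act g (sm s (π q)) = sm s (π q)
      rw [hactsm, hequiv, hq g]
    exact closure_minimal hsub hcl hx
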